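/- Let n ≥ 3. If there exists a quandle of cyclic type with n elements, then n is a power of a prime number. -/

import Mathlib

/-- The inner automorphism group of a quandle: the subgroup of permutations
generated by the maps `φ x : y ↦ x ◃ y`. -/
def Inn (X : Type*) [Quandle X] : Subgroup (Equiv.Perm X) :=
  Subgroup.closure (Set.range (fun x : X => Rack.act' x))


/-- A finite quandle is of cyclic type if each `φ x` is a cycle whose unique
fixed point is `x` (i.e. it acts as an `(n-1)`-cycle on `X \ {x}`). -/
def IsCyclicType (X : Type*) [Quandle X] : Prop :=
  ∀ x : X, Equiv.Perm.IsCycle (Rack.act' x) ∧ ∀ y : X, Rack.act' x y = y ↔ y = x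

namespace CyclicQuandleAux

open Equiv Equiv.Perm

variable {X : Type} [Quandle X]

lemma phi_mem (x : X) : Rack.act' x ∈ Inn X :=
  Subgroup.subset_closure ⟨x, rfl⟩

lemma inn_conj {g : Equiv.Perm X} (hg : g ∈ Inn X) :
    ∀ x : X, Rack.act' (g x) = g * Rack.act' x * g⁻¹ := by
  induction hg using Subgroup.closure_induction with
  | mem a ha =>
    obtain ⟨y, rfl⟩ := ha
    intro x
    simpa [Rack.act'_apply] using Rack.ad_conj y x
  | one => simp
  | mul a b ha hb iha ihb =>
    intro x
    have h1 : (a * b) x = a (b x) := rfl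
    rw [h1, iha (b x), ihb x]
    group
  | inv a ha iha =>
    intro x
    have h2 := iha (a⁻¹ x)
    have h3 : a (a⁻¹ x) = x := by simp
    rw [h3] at h2
    rw [h2]
    group

section Main

variable [Fintype X] (hc : IsCyclicType X) (h3 : 3 ≤ Fintype.card X)

omit [Fintype X] in
/-- `φ x` fixes `x`. -/
lemma phi_fix (x : X) : Rack.act' x x = x := Quandle.fix

include hc

/-- Sharp 2-transitivity: an inner automorphism fixing two points is the identity. -/
lemma sharp {g : Equiv.Perm X} (hg : g ∈ Inn X) {x y : X} (hxy : x ≠ y)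
    (hx : g x = x) (hy : g y = y) : g = 1 := by
  -- g commutes with φ x
  have hcomm : g * Rack.act' x = Rack.act' x * g := by
    have h0 := inn_conj hg x
    rw [hx] at h0
    conv_rhs => rw [h0]
    group
  have hcrw : Commute g (Rack.act' x) := hcomm
  have hcommz : ∀ k : ℤ, g * (Rack.act' x) ^ k = (Rack.act' x) ^ k * g :=
    fun k => (hcrw.zpow_right k).eq
  ext z
  simp only [Perm.one_apply]
  rcases eq_or_ne z x with rfl | hzx
  · exact hx
  · -- z = (φ x)^k y for some k
    obtain ⟨k, hk⟩ := (hc x).1.exists_zpow_eq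
      (by rw [Ne, (hc x).2 y]; exact fun h => hxy h.symm)
      (by rw [Ne, (hc x).2 z]; exact hzx)
    have : g z = ((Rack.act' x) ^ k * g) y := by
      rw [← hcommz k]
      simp [Perm.mul_apply, hk]
    rw [this]
    simp [Perm.mul_apply, hy, hk]

omit hc in
/-- All powers of `φ x` fix `x`. -/
lemma phi_zpow_fix (x : X) (m : ℤ) : ((Rack.act' x) ^ m) x = x := by
  induction m using Int.induction_on with
  | zero => rfl
  | succ i ih => rw [add_comm, zpow_add, Perm.mul_apply, zpow_one, ih, phi_fix]
  | pred i ih =>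
    rw [sub_eq_add_neg, add_comm, zpow_add, Perm.mul_apply, ih, zpow_neg, zpow_one]
    exact (Rack.act' x).injective (by rw [← Perm.mul_apply, mul_inv_cancel, Perm.one_apply, phi_fix])

/-- Nontrivial powers of `φ x` fix only `x`. -/
lemma zpow_fix_only {x : X} {k : ℤ} (hk : (Rack.act' x) ^ k ≠ 1) {y : X}
    (hy : ((Rack.act' x) ^ k) y = y) : y = x := by
  by_contra hyx
  exact hk (sharp hc (Subgroup.zpow_mem _ (phi_mem x) k) hyx hy (phi_zpow_fix x k))

/-- Every element of `Inn X` fixing `x` is a power of `φ x`. -/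
lemma stab_eq_zpow (h3 : 3 ≤ Fintype.card X) {g : Equiv.Perm X} (hg : g ∈ Inn X) {x : X}
    (hx : g x = x) : ∃ k : ℤ, g = (Rack.act' x) ^ k := by
  have : Nontrivial X := Fintype.one_lt_card_iff_nontrivial.mp (by omega)
  obtain ⟨y, hyx⟩ := exists_ne x
  rcases eq_or_ne (g y) y with hgy | hgy
  · exact ⟨0, by simpa using sharp hc hg (Ne.symm hyx) hx hgy⟩
  · have hgyx : g y ≠ x := fun h => hyx (g.injective (h.trans hx.symm))
    obtain ⟨k, hk⟩ := (hc x).1.exists_zpow_eq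
      (by rw [Ne, (hc x).2 y]; exact hyx)
      (by rw [Ne, (hc x).2 (g y)]; exact hgyx)
    refine ⟨k, ?_⟩
    have h1 : ((Rack.act' x) ^ (-k) * g) x = x := by
      rw [Perm.mul_apply, hx, phi_zpow_fix]
    have h2 : ((Rack.act' x) ^ (-k) * g) y = y := by
      have h4 : ((Rack.act' x) ^ (-k)) (((Rack.act' x) ^ k) y) = y := by
        rw [← Perm.mul_apply, ← zpow_add]; simp
      rw [hk] at h4
      simpa [Perm.mul_apply] using h4
    have h0 := sharp hc (Subgroup.mul_mem _ (Subgroup.zpow_mem _ (phi_mem x) (-k)) hg)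
      hyx.symm h1 h2
    have : g = (Rack.act' x) ^ k * ((Rack.act' x) ^ (-k) * g) := by group
    rw [this, h0, mul_one]

/-- The order of `φ x` is `n - 1`. -/
lemma phi_orderOf (x : X) : orderOf (Rack.act' x) = Fintype.card X - 1 := by
  classical
  rw [(hc x).1.orderOf]
  have hsupp : Equiv.Perm.support (Rack.act' x) = Finset.univ.erase x := by
    ext y
    have h := (hc x).2 y
    rw [Rack.act'_apply] at h
    simp [Equiv.Perm.mem_support, h]
  rw [hsupp, Finset.card_erase_of_mem (Finset.mem_univ x), Finset.card_univ]

/-- `Inn X` acts transitively. -/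
lemma exists_smul_eq' (h3 : 3 ≤ Fintype.card X) (y z : X) : ∃ g ∈ Inn X, g y = z := by
  classical
  rcases eq_or_ne y z with rfl | hyz
  · exact ⟨1, one_mem _, rfl⟩
  · have hne : (Finset.univ \ {y, z} : Finset X).Nonempty := by
      rw [← Finset.card_pos, Finset.card_sdiff_of_subset (Finset.subset_univ _), Finset.card_univ]
      have h2 : ({y, z} : Finset X).card ≤ 2 :=
        (Finset.card_insert_le _ _).trans (by simp)
      omega
    obtain ⟨x, hx⟩ := hne
    simp only [Finset.mem_sdiff, Finset.mem_insert, Finset.mem_singleton, not_or] at hx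
    obtain ⟨-, hxy, hxz⟩ := hx
    obtain ⟨k, hk⟩ := (hc x).1.exists_zpow_eq
      (by rw [Ne, (hc x).2 y]; exact fun h => hxy h.symm)
      (by rw [Ne, (hc x).2 z]; exact fun h => hxz h.symm)
    exact ⟨(Rack.act' x) ^ k, Subgroup.zpow_mem _ (phi_mem x) k, hk⟩

/-- The stabilizer of `x` in `Inn X` is generated by `φ x`. -/
lemma stabilizer_eq (h3 : 3 ≤ Fintype.card X) (x : X) :
    MulAction.stabilizer (Inn X) x = Subgroup.zpowers (⟨Rack.act' x, phi_mem x⟩ : Inn X) := by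
  ext g
  rw [MulAction.mem_stabilizer_iff, Subgroup.mem_zpowers_iff]
  constructor
  · intro hg
    have hg' : (g : Equiv.Perm X) x = x := hg
    obtain ⟨k, hk⟩ := stab_eq_zpow hc h3 g.2 hg'
    exact ⟨k, Subtype.ext (by push_cast; exact hk.symm)⟩
  · rintro ⟨k, rfl⟩
    show ((((⟨Rack.act' x, phi_mem x⟩ : Inn X) ^ k) : Inn X) : Equiv.Perm X) x = x
    push_cast
    exact phi_zpow_fix x k

lemma card_stabilizer (h3 : 3 ≤ Fintype.card X) (x : X) :
    Nat.card (MulAction.stabilizer (Inn X) x) = Fintype.card X - 1 := by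
  rw [stabilizer_eq hc h3 x, Nat.card_zpowers, Subgroup.orderOf_mk, phi_orderOf hc]

lemma card_inn (h3 : 3 ≤ Fintype.card X) :
    Nat.card (Inn X) = Fintype.card X * (Fintype.card X - 1) := by
  have : Nonempty X := Fintype.card_pos_iff.mp (by omega)
  obtain ⟨x⟩ := this
  haveI : MulAction.IsPretransitive (Inn X) X := by
    constructor
    intro y z
    obtain ⟨g, hg, hgyz⟩ := exists_smul_eq' hc h3 y z
    exact ⟨⟨g, hg⟩, hgyz⟩
  have horb : Nat.card (MulAction.orbit (Inn X) x) = Fintype.card X := by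
    rw [MulAction.orbit_eq_univ, Nat.card_congr (Equiv.Set.univ X), Nat.card_eq_fintype_card]
  calc Nat.card (Inn X)
      = Nat.card ((Inn X) ⧸ MulAction.stabilizer (Inn X) x) *
        Nat.card (MulAction.stabilizer (Inn X) x) :=
        Subgroup.card_eq_card_quotient_mul_card_subgroup _
    _ = Fintype.card X * (Fintype.card X - 1) := by
        rw [← Nat.card_congr (MulAction.orbitEquivQuotientStabilizer (Inn X) x), horb,
          card_stabilizer hc h3 x]

/-- There are exactly `n - 1` fixed-point-free elements in `Inn X`. -/
lemma card_fpf (h3 : 3 ≤ Fintype.card X) :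
    Nat.card {g : Inn X // ∀ z : X, (g : Equiv.Perm X) z ≠ z} = Fintype.card X - 1 := by
  classical
  have hX : Nonempty X := Fintype.card_pos_iff.mp (by omega)
  obtain ⟨x0⟩ := hX
  set n := Fintype.card X with hn
  set B : Finset (Inn X) :=
    Finset.univ.filter (fun g => ∀ z : X, (g : Equiv.Perm X) z ≠ z) with hB
  set A : Finset (Inn X) :=
    Finset.univ.filter (fun g => g ≠ 1 ∧ ∃ z : X, (g : Equiv.Perm X) z = z) with hA
  have hNat : Nat.card {g : Inn X // ∀ z : X, (g : Equiv.Perm X) z ≠ z} = B.card := by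
    rw [Nat.card_eq_fintype_card, Fintype.card_subtype]
  -- the per-point stabilizer count
  have hstab : ∀ z : X,
      (Finset.univ.filter fun g : Inn X => (g : Equiv.Perm X) z = z).card = n - 1 := by
    intro z
    have e : {g : Inn X // (g : Equiv.Perm X) z = z} ≃ MulAction.stabilizer (Inn X) z :=
      Equiv.subtypeEquivRight (fun g => by
        rw [MulAction.mem_stabilizer_iff]
        exact Iff.rfl)
    calc (Finset.univ.filter fun g : Inn X => (g : Equiv.Perm X) z = z).card
        = Fintype.card {g : Inn X // (g : Equiv.Perm X) z = z} :=
          (Fintype.card_subtype _).symm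
      _ = Nat.card {g : Inn X // (g : Equiv.Perm X) z = z} :=
          (Nat.card_eq_fintype_card).symm
      _ = Nat.card (MulAction.stabilizer (Inn X) z) := Nat.card_congr e
      _ = n - 1 := card_stabilizer hc h3 z
  -- double counting
  have hswap : ∑ g : Inn X, (Finset.univ.filter fun z : X => (g : Equiv.Perm X) z = z).card
      = ∑ z : X, (Finset.univ.filter fun g : Inn X => (g : Equiv.Perm X) z = z).card := by
    simp_rw [Finset.card_filter]
    exact Finset.sum_comm
  have hsum : ∑ g : Inn X, (Finset.univ.filter fun z : X => (g : Equiv.Perm X) z = z).card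
      = n * (n - 1) := by
    rw [hswap]
    rw [Finset.sum_congr rfl (fun z _ => hstab z), Finset.sum_const, Finset.card_univ,
      smul_eq_mul]
  -- split off the identity
  have hone : (Finset.univ.filter fun z : X => ((1 : Inn X) : Equiv.Perm X) z = z).card
      = n := by
    simp [Finset.filter_true_of_mem, hn]
  have hterm : ∀ g : Inn X, g ≠ 1 →
      (Finset.univ.filter fun z : X => (g : Equiv.Perm X) z = z).card
      = if (∃ z : X, (g : Equiv.Perm X) z = z) then 1 else 0 := by
    intro g hg1
    have hle : (Finset.univ.filter fun z : X => (g : Equiv.Perm X) z = z).card ≤ 1 := by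
      rw [Finset.card_le_one]
      intro a ha b hb
      simp only [Finset.mem_filter] at ha hb
      by_contra hab
      have : (g : Equiv.Perm X) = 1 := sharp hc g.2 hab ha.2 hb.2
      exact hg1 (Subtype.ext this)
    split_ifs with hex
    · obtain ⟨z, hz⟩ := hex
      have hpos : 0 < (Finset.univ.filter fun z : X => (g : Equiv.Perm X) z = z).card :=
        Finset.card_pos.mpr ⟨z, by simp [hz]⟩
      omega
    · rw [Finset.card_eq_zero, Finset.filter_eq_empty_iff]
      intro z _
      exact fun hz => hex ⟨z, hz⟩
  have hsplit : ∑ g : Inn X, (Finset.univ.filter fun z : X => (g : Equiv.Perm X) z = z).card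
      = n + A.card := by
    rw [← Finset.add_sum_erase _ _ (Finset.mem_univ (1 : Inn X)), hone]
    congr 1
    rw [Finset.sum_congr rfl (fun g hg => hterm g (Finset.ne_of_mem_erase hg)),
      ← Finset.card_filter]
    congr 1
    ext g
    simp only [hA, Finset.mem_filter, Finset.mem_erase, Finset.mem_univ, true_and, and_true]
  -- partition of `Inn X`
  have hAB : A.card + B.card = Nat.card (Inn X) - 1 := by
    have hunion : A ∪ B = Finset.univ.erase (1 : Inn X) := by
      ext g
      simp only [hA, hB, Finset.mem_union, Finset.mem_filter, Finset.mem_univ, true_and,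
        Finset.mem_erase, and_true]
      constructor
      · rintro (⟨hg, -⟩ | hg)
        · exact hg
        · intro h1
          subst h1
          exact hg x0 rfl
      · intro hg
        by_cases hex : ∃ z : X, (g : Equiv.Perm X) z = z
        · exact Or.inl ⟨hg, hex⟩
        · exact Or.inr (fun z hz => hex ⟨z, hz⟩)
    have hdisj : Disjoint A B := by
      rw [Finset.disjoint_left]
      intro g hgA hgB
      simp only [hA, Finset.mem_filter] at hgA
      simp only [hB, Finset.mem_filter] at hgB
      obtain ⟨-, -, z, hz⟩ := hgA
      exact hgB.2 z hz
    rw [← Finset.card_union_of_disjoint hdisj, hunion,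
      Finset.card_erase_of_mem (Finset.mem_univ _), Finset.card_univ,
      ← Nat.card_eq_fintype_card]
  rw [hNat]
  have hKinn : Nat.card (Inn X) = n * (n - 1) := card_inn hc h3
  rw [hKinn] at hAB
  rw [hsplit] at hsum
  obtain ⟨T, hT⟩ : ∃ T, n * (n - 1) = T := ⟨_, rfl⟩
  rw [hT] at hsum hAB
  omega

/-- Any two fixed-point-free elements of `Inn X` are conjugate. -/
lemma fpf_conj (h3 : 3 ≤ Fintype.card X) {g h : Inn X}
    (hg : ∀ z : X, (g : Equiv.Perm X) z ≠ z) (hh : ∀ z : X, (h : Equiv.Perm X) z ≠ z) :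
    ∃ a : Inn X, a * g * a⁻¹ = h := by
  classical
  have hX : Nonempty X := Fintype.card_pos_iff.mp (by omega)
  obtain ⟨x⟩ := hX
  set n := Fintype.card X with hn
  set c : Inn X := ⟨Rack.act' x, phi_mem x⟩ with hcdef
  have horder : orderOf c = n - 1 := by
    rw [hcdef, Subgroup.orderOf_mk, phi_orderOf hc]
  set F : Fin (n - 1) → Inn X := fun k => c ^ (k : ℕ) * g * (c ^ (k : ℕ))⁻¹ with hF
  -- freeness : c ^ m commuting with g forces c ^ m = 1
  have hfree : ∀ m : ℕ, c ^ m * g * (c ^ m)⁻¹ = g → c ^ m = 1 := by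
    intro m hm
    have hcomm : (c ^ m) * g = g * (c ^ m) := by
      have h9 := congrArg (fun t => t * c ^ m) hm
      simpa only [inv_mul_cancel_right] using h9
    have hcoe : ((c ^ m : Inn X) : Equiv.Perm X) = (Rack.act' x) ^ m := by
      push_cast [hcdef]
      rfl
    set e : Equiv.Perm X := (Rack.act' x) ^ m with he
    have hcomm' : e * (g : Equiv.Perm X) = (g : Equiv.Perm X) * e := by
      have h9 := congrArg (Subtype.val) hcomm
      push_cast at h9
      exact h9
    have hex : e x = x := by
      have := phi_zpow_fix (X := X) x (m : ℤ)
      rwa [zpow_natCast] at this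
    have hegx : e ((g : Equiv.Perm X) x) = (g : Equiv.Perm X) x := by
      have := congrArg (fun σ : Equiv.Perm X => σ x) hcomm'
      simp only [Equiv.Perm.mul_apply] at this
      rw [this, hex]
    have hne : x ≠ (g : Equiv.Perm X) x := fun hxe => hg x hxe.symm
    have he1 : e = 1 :=
      sharp hc (Subgroup.pow_mem _ (phi_mem x) m) hne hex hegx
    exact Subtype.ext (by simp [hcoe, he1])
  have key : ∀ i j : Fin (n - 1), (j : ℕ) ≤ (i : ℕ) → F i = F j → i = j := by
    intro i j hji hij
    set m : ℕ := (i : ℕ) - (j : ℕ) with hm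
    have hpow : c ^ (i : ℕ) = c ^ (j : ℕ) * c ^ m := by
      rw [← pow_add]
      congr 1
      omega
    have h5 : c ^ m * g * (c ^ m)⁻¹ = g := by
      calc c ^ m * g * (c ^ m)⁻¹
          = (c ^ (j : ℕ))⁻¹ * (c ^ (i : ℕ) * g * (c ^ (i : ℕ))⁻¹) * c ^ (j : ℕ) := by
            rw [hpow]; group
        _ = (c ^ (j : ℕ))⁻¹ * (c ^ (j : ℕ) * g * (c ^ (j : ℕ))⁻¹) * c ^ (j : ℕ) := by
            rw [hF] at hij
            simp only at hij
            rw [hij]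
        _ = g := by group
    have hm1 : c ^ m = 1 := hfree m h5
    have hdvd : (n - 1) ∣ m := horder ▸ orderOf_dvd_of_pow_eq_one hm1
    have hi := i.2
    have hj := j.2
    have hm0 : m = 0 := Nat.eq_zero_of_dvd_of_lt hdvd (by omega)
    exact Fin.ext (by omega)
  have hinj : Function.Injective F := by
    intro i j hij
    rcases le_total (j : ℕ) (i : ℕ) with hji | hij'
    · exact key i j hji hij
    · exact (key j i hij' hij.symm).symm
  -- the image consists of fixed-point-free elements
  set B : Finset (Inn X) :=
    Finset.univ.filter (fun g => ∀ z : X, (g : Equiv.Perm X) z ≠ z) with hB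
  have hBcard : B.card = n - 1 := by
    have := card_fpf hc h3
    rwa [Nat.card_eq_fintype_card, Fintype.card_subtype] at this
  have himg : Finset.image F Finset.univ ⊆ B := by
    intro b hb
    simp only [Finset.mem_image] at hb
    obtain ⟨k, -, rfl⟩ := hb
    simp only [hB, Finset.mem_filter, Finset.mem_univ, true_and]
    intro z hz
    have hz' : ((c ^ (k : ℕ) * g * (c ^ (k : ℕ))⁻¹ : Inn X) : Equiv.Perm X) z = z := hz
    push_cast at hz'
    set e : Equiv.Perm X := ((c ^ (k : ℕ) : Inn X) : Equiv.Perm X) with he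
    have : (g : Equiv.Perm X) (e⁻¹ z) = e⁻¹ z := by
      have h7 : e ((g : Equiv.Perm X) (e⁻¹ z)) = z := by
        rw [he]
        push_cast
        exact hz'
      have := congrArg (fun w => e⁻¹ w) h7
      simpa using this
    exact hg _ this
  have hcards : B.card ≤ (Finset.image F Finset.univ).card := by
    rw [Finset.card_image_of_injective _ hinj, Finset.card_univ, Fintype.card_fin, hBcard]
  have heq : Finset.image F Finset.univ = B :=
    Finset.eq_of_subset_of_card_le himg hcards
  have hhB : h ∈ B := by
    simp only [hB, Finset.mem_filter, Finset.mem_univ, true_and]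
    exact hh
  rw [← heq] at hhB
  simp only [Finset.mem_image] at hhB
  obtain ⟨k, -, hk⟩ := hhB
  exact ⟨c ^ (k : ℕ), hk⟩

/-- For every prime `p` dividing `n` there is a fixed-point-free element of order `p`. -/
lemma fpf_of_prime (h3 : 3 ≤ Fintype.card X) {p : ℕ} (hp : p.Prime)
    (hpn : p ∣ Fintype.card X) :
    ∃ g : Inn X, orderOf g = p ∧ ∀ z : X, (g : Equiv.Perm X) z ≠ z := by
  classical
  haveI : Fact p.Prime := ⟨hp⟩
  have hdvd : p ∣ Fintype.card (Inn X) := by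
    rw [← Nat.card_eq_fintype_card, card_inn hc h3]
    exact Dvd.dvd.mul_right hpn _
  obtain ⟨g, hg⟩ := exists_prime_orderOf_dvd_card p hdvd
  refine ⟨g, hg, ?_⟩
  have hgo' : orderOf (g : Equiv.Perm X) = p := by rw [Subgroup.orderOf_coe, hg]
  set H : Subgroup (Equiv.Perm X) := Subgroup.zpowers (g : Equiv.Perm X) with hH
  have hpg : IsPGroup p H :=
    IsPGroup.of_card (by rw [Nat.card_zpowers, hgo', pow_one])
  have hmod := hpg.card_modEq_card_fixedPoints X
  have hsub : Subsingleton (MulAction.fixedPoints H X) := by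
    constructor
    rintro ⟨a, ha⟩ ⟨b, hb⟩
    by_contra hab
    have hab' : a ≠ b := fun h => hab (by simpa using h)
    have hfa : (g : Equiv.Perm X) a = a := ha ⟨(g : Equiv.Perm X), Subgroup.mem_zpowers _⟩
    have hfb : (g : Equiv.Perm X) b = b := hb ⟨(g : Equiv.Perm X), Subgroup.mem_zpowers _⟩
    have : (g : Equiv.Perm X) = 1 := sharp hc g.2 hab' hfa hfb
    rw [this] at hgo'
    simp only [orderOf_one] at hgo'
    exact hp.one_lt.ne hgo'
  have hle1 : Nat.card (MulAction.fixedPoints H X) ≤ 1 := by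
    haveI := Fintype.ofFinite (MulAction.fixedPoints H X)
    rw [Nat.card_eq_fintype_card]
    exact Fintype.card_le_one_iff_subsingleton.mpr hsub
  have hpd : p ∣ Nat.card (MulAction.fixedPoints H X) := by
    have h0 : Nat.card X ≡ 0 [MOD p] :=
      (Nat.modEq_zero_iff_dvd).mpr (by rwa [Nat.card_eq_fintype_card])
    exact (Nat.modEq_zero_iff_dvd).mp (hmod.symm.trans h0)
  have hzero : Nat.card (MulAction.fixedPoints H X) = 0 :=
    Nat.eq_zero_of_dvd_of_lt hpd (lt_of_le_of_lt hle1 hp.one_lt)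
  have hempty : IsEmpty (MulAction.fixedPoints H X) := by
    rcases Nat.card_eq_zero.mp hzero with h | h
    · exact h
    · exact absurd h (not_infinite_iff_finite.mpr (Finite.Set.subset _ (fun a _ => trivial)))
  intro z hz
  apply hempty.false
  refine ⟨z, ?_⟩
  rintro ⟨σ, hσ⟩
  obtain ⟨k, rfl⟩ := Subgroup.mem_zpowers_iff.mp hσ
  show ((g : Equiv.Perm X) ^ k) z = z
  exact Function.IsFixedPt.perm_zpow hz k

/-- All primes dividing `n` coincide. -/
lemma prime_unique (h3 : 3 ≤ Fintype.card X) {p q : ℕ} (hp : p.Prime) (hq : q.Prime)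
    (hpn : p ∣ Fintype.card X) (hqn : q ∣ Fintype.card X) : p = q := by
  obtain ⟨g, hgo, hgf⟩ := fpf_of_prime hc h3 hp hpn
  obtain ⟨h, hho, hhf⟩ := fpf_of_prime hc h3 hq hqn
  obtain ⟨a, ha⟩ := fpf_conj hc h3 hgf hhf
  have hsemi : SemiconjBy a g (a * g * a⁻¹) := by
    unfold SemiconjBy
    group
  rw [← hgo, ← hho, ← ha]
  exact hsemi.orderOf_eq

end Main

end CyclicQuandleAux

theorem stmt11 (n : ℕ) (h3 : 3 ≤ n)
    (h : ∃ (X : Type) (_ : Fintype X) (_ : Quandle X),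
      Fintype.card X = n ∧ IsCyclicType X) :
    IsPrimePow n := by
  obtain ⟨X, hF, hQ, hcard, hc⟩ := h
  rw [isPrimePow_iff_unique_prime_dvd]
  have hmin : n.minFac.Prime := Nat.minFac_prime (by omega)
  refine ⟨n.minFac, ⟨hmin, Nat.minFac_dvd _⟩, ?_⟩
  rintro q ⟨hq, hqd⟩
  have h3' : 3 ≤ @Fintype.card X hF := by rw [hcard]; exact h3
  have h1 : q ∣ @Fintype.card X hF := by rw [hcard]; exact hqd
  have h2 : n.minFac ∣ @Fintype.card X hF := by rw [hcard]; exact Nat.minFac_dvd _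
  exact @CyclicQuandleAux.prime_unique X hQ hF hc h3' q n.minFac hq hmin h1 h2
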